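/- For every n ≥ δ, writing r = n mod a: if r ≥ δ − a then w(n) − 2b = w(n − δ), and if r < δ − a then w(n) − 2b = w(n − δ) + a. -/
import Mathlib


/-- `w a b δ n = n + a⌊n/a⌋ + b⌊n/δ⌋`. -/
def w (a b δ n : ℕ) : ℕ := n + a * (n / a) + b * (n / δ)

/-- For every `n ≥ δ`, writing `r = n % a`: if `r ≥ δ - a` then
`w n - 2b = w (n - δ)`, and if `r < δ - a` then `w n - 2b = w (n - δ) + a`. -/
theorem stmt_1 (a δ : ℕ) (ha : 0 < a) (hlt : a < δ) (hlt2 : δ < 2 * a)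
    (hgcd : Nat.gcd a δ = 1) (b : ℕ) (hb : b = a + δ) :
    ∀ n : ℕ, δ ≤ n →
      (δ - a ≤ n % a → w a b δ n - 2 * b = w a b δ (n - δ)) ∧
      (n % a < δ - a → w a b δ n - 2 * b = w a b δ (n - δ) + a) := by
  intro n hn
  obtain ⟨m, rfl⟩ : ∃ m, n = m + δ := ⟨n - δ, by omega⟩
  have hδ0 : 0 < δ := by omega
  have hδdiv : (m + δ) / δ = m / δ + 1 := Nat.add_div_right m hδ0
  have hsub : m + δ - δ = m := by omega
  have hd : δ - a < a := by omega
  have hma : m % a < a := Nat.mod_lt m ha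
  have hδa : δ % a = δ - a := by
    rw [show δ = (δ - a) + a by omega, Nat.add_mod_right, Nat.mod_eq_of_lt hd]; omega
  have hsplit : m + δ = (m + (δ - a)) + a := by omega
  have hdd : (δ - a) / a = 0 := Nat.div_eq_of_lt hd
  have hdm : (δ - a) % a = δ - a := Nat.mod_eq_of_lt hd
  by_cases hc : m % a + (δ - a) < a
  · -- no carry
    have hadiv : (m + δ) / a = m / a + 1 := by
      rw [hsplit, Nat.add_div_right _ ha, Nat.add_div ha, hdd, hdm]
      simp [Nat.not_le.mpr hc]
    have hmod : (m + δ) % a = m % a + (δ - a) := by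
      rw [Nat.add_mod, hδa, Nat.mod_eq_of_lt hc]
    constructor
    · intro _
      simp only [w, hsub, hδdiv, hadiv, Nat.mul_add, Nat.mul_one]
      generalize a * (m / a) = X
      generalize b * (m / δ) = Y
      omega
    · intro h
      omega
  · -- carry
    have hadiv : (m + δ) / a = m / a + 2 := by
      rw [hsplit, Nat.add_div_right _ ha, Nat.add_div ha, hdd, hdm]
      simp [Nat.le_of_not_lt hc]
    have hmod : (m + δ) % a = m % a + (δ - a) - a := by
      rw [Nat.add_mod, hδa, Nat.mod_eq_sub_mod (by omega), Nat.mod_eq_of_lt (by omega)]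
    constructor
    · intro h
      omega
    · intro _
      simp only [w, hsub, hδdiv, hadiv, Nat.mul_add, Nat.mul_one]
      generalize a * (m / a) = X
      generalize b * (m / δ) = Y
      omega
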